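/- For every complex antisymmetric n×n matrix w, there exists a unitary n×n matrix U such that w' = U w Uᵀ is block diagonal, consisting of 2×2 blocks of the form [[0, zᵢ],[-zᵢ, 0]] with zᵢ > 0 real, followed by a zero block. -/

import Mathlib

open Matrix

namespace AntisymAux
noncomputable section
open scoped ComplexOrder

variable {n m : ℕ}

/-- elementary hermitian inner product -/
def ip {n : ℕ} (x y : Fin n → ℂ) : ℂ := star x ⬝ᵥ y

lemma ip_apply (x y : Fin n → ℂ) : ip x y = ∑ k, (starRingEnd ℂ) (x k) * y k := rfl

/-- the bilinear form of `w` -/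
def B {n : ℕ} (w : Matrix (Fin n) (Fin n) ℂ) (x y : Fin n → ℂ) : ℂ := x ⬝ᵥ (w *ᵥ y)

def canon (r : ℕ) (z : ℕ → ℝ) (i j : ℕ) : ℂ :=
  if i % 2 = 0 ∧ j = i + 1 ∧ i < 2 * r then ((z (i / 2) : ℝ) : ℂ)
  else if j % 2 = 0 ∧ i = j + 1 ∧ j < 2 * r then (-(z (j / 2) : ℝ) : ℂ)
  else 0

def Good (n : ℕ) (w : Matrix (Fin n) (Fin n) ℂ) : Prop :=
  ∃ r : ℕ, 2 * r ≤ n ∧ ∃ z : ℕ → ℝ, (∀ k, k < r → 0 < z k) ∧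
    ∃ rows : Fin n → (Fin n → ℂ),
      (∀ i j, ip (rows i) (rows j) = if i = j then 1 else 0) ∧
      (∀ i j, B w (rows i) (rows j) = canon r z (i : ℕ) (j : ℕ))

lemma ip_conj (x y : Fin n → ℂ) : ip x y = (starRingEnd ℂ) (ip y x) := by
  simp [ip_apply, mul_comm, map_sum]

lemma ip_eq_inner (x y : EuclideanSpace ℂ (Fin n)) :
    (inner ℂ x y : ℂ) = ip x y := by
  simp [PiLp.inner_apply, RCLike.inner_apply, ip_apply]
  exact Finset.sum_congr rfl fun k _ => mul_comm _ _

lemma dot_sum_left {ι : Type*} [Fintype ι] (f : ι → Fin n → ℂ) (y : Fin n → ℂ) :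
    (∑ j, f j) ⬝ᵥ y = ∑ j, f j ⬝ᵥ y := by
  simp only [dotProduct, Finset.sum_apply, Finset.sum_mul]
  exact Finset.sum_comm

lemma dot_sum_right {ι : Type*} [Fintype ι] (x : Fin n → ℂ) (f : ι → Fin n → ℂ) :
    x ⬝ᵥ (∑ j, f j) = ∑ j, x ⬝ᵥ f j := by
  simp only [dotProduct, Finset.sum_apply, Finset.mul_sum]
  exact Finset.sum_comm

lemma mulVec_sum {ι : Type*} [Fintype ι] (w : Matrix (Fin n) (Fin n) ℂ) (f : ι → Fin n → ℂ) :
    w *ᵥ (∑ j, f j) = ∑ j, w *ᵥ f j := by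
  have := map_sum w.mulVecLin f Finset.univ
  simpa only [Matrix.mulVecLin_apply] using this

lemma B_sum_right (w : Matrix (Fin n) (Fin n) ℂ) (x : Fin n → ℂ)
    (d : Fin m → ℂ) (y : Fin m → Fin n → ℂ) :
    B w x (∑ j, d j • y j) = ∑ j, d j * B w x (y j) := by
  unfold B
  rw [mulVec_sum, dot_sum_right]
  refine Finset.sum_congr rfl fun j _ => ?_
  rw [Matrix.mulVec_smul, dotProduct_smul, smul_eq_mul]

lemma B_sum_left (w : Matrix (Fin n) (Fin n) ℂ)
    (a : Fin m → ℂ) (x : Fin m → Fin n → ℂ) (y : Fin n → ℂ) :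
    B w (∑ j, a j • x j) y = ∑ j, a j * B w (x j) y := by
  unfold B
  rw [dot_sum_left]
  refine Finset.sum_congr rfl fun j _ => ?_
  rw [smul_dotProduct, smul_eq_mul]

lemma B_sum_sum (w : Matrix (Fin n) (Fin n) ℂ)
    (a d : Fin m → ℂ) (x y : Fin m → Fin n → ℂ) :
    B w (∑ j, a j • x j) (∑ j, d j • y j)
      = ∑ j, ∑ j', a j * d j' * B w (x j) (y j') := by
  rw [B_sum_left]
  refine Finset.sum_congr rfl fun j _ => ?_
  rw [B_sum_right, Finset.mul_sum]
  refine Finset.sum_congr rfl fun j' _ => by ring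

lemma ip_sum_right (x : Fin n → ℂ) (d : Fin m → ℂ) (y : Fin m → Fin n → ℂ) :
    ip x (∑ j, d j • y j) = ∑ j, d j * ip x (y j) := by
  unfold ip
  rw [dot_sum_right]
  refine Finset.sum_congr rfl fun j _ => ?_
  rw [dotProduct_smul, smul_eq_mul]

lemma ip_sum_left (a : Fin m → ℂ) (x : Fin m → Fin n → ℂ) (y : Fin n → ℂ) :
    ip (∑ j, a j • x j) y = ∑ j, (starRingEnd ℂ) (a j) * ip (x j) y := by
  unfold ip
  rw [star_sum, dot_sum_left]
  · refine Finset.sum_congr rfl fun j _ => ?_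
    rw [star_smul, smul_dotProduct]
    simp [smul_eq_mul]

lemma ip_sum_sum (a d : Fin m → ℂ) (x y : Fin m → Fin n → ℂ) :
    ip (∑ j, a j • x j) (∑ j, d j • y j)
      = ∑ j, ∑ j', (starRingEnd ℂ) (a j) * d j' * ip (x j) (y j') := by
  rw [ip_sum_left]
  refine Finset.sum_congr rfl fun j _ => ?_
  rw [ip_sum_right, Finset.mul_sum]
  refine Finset.sum_congr rfl fun j' _ => by ring

lemma B_skew {w : Matrix (Fin n) (Fin n) ℂ} (hw : wᵀ = -w) (x y : Fin n → ℂ) :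
    B w x y = - B w y x := by
  have hwe : ∀ i j, w i j = - w j i := by
    intro i j
    have := congrFun (congrFun hw j) i
    simpa [Matrix.transpose_apply] using this
  simp only [B, dotProduct, mulVec, Finset.mul_sum, ← Finset.sum_neg_distrib]
  rw [Finset.sum_comm]
  refine Finset.sum_congr rfl fun l _ => Finset.sum_congr rfl fun k _ => ?_
  rw [hwe k l]; ring

lemma ip_smul_smul (c d : ℂ) (x y : Fin n → ℂ) :
    ip (c • x) (d • y) = (starRingEnd ℂ) c * d * ip x y := by
  simp only [ip_apply, Pi.smul_apply, smul_eq_mul, _root_.map_mul, Finset.mul_sum]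
  exact Finset.sum_congr rfl fun k _ => by ring

lemma ip_star_star (x y : Fin n → ℂ) :
    ip (star x) (star y) = (starRingEnd ℂ) (ip x y) := by
  simp only [ip_apply, Pi.star_apply, map_sum, _root_.map_mul]
  exact Finset.sum_congr rfl fun k _ => by
    simp [mul_comm]

lemma B_eq_of_rel {w : Matrix (Fin n) (Fin n) ℂ} {v a : Fin n → ℂ} {c : ℂ}
    (h : w *ᵥ v = c • star a) (x : Fin n → ℂ) : B w x v = c * ip a x := by
  unfold B
  rw [h, dotProduct_smul, smul_eq_mul]
  congr 1
  exact dotProduct_comm _ _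

lemma exists_pair (w : Matrix (Fin n) (Fin n) ℂ) (hw : wᵀ = -w) (hw0 : w ≠ 0) :
    ∃ (σ : ℝ) (u v : Fin n → ℂ), 0 < σ ∧ ip u u = 1 ∧ ip v v = 1 ∧ ip u v = 0 ∧
      w *ᵥ v = (σ : ℂ) • star u ∧ w *ᵥ u = -((σ : ℂ) • star v) := by
  have hwe : ∀ i j, w i j = - w j i := by
    intro i j
    have := congrFun (congrFun hw j) i
    simpa [Matrix.transpose_apply] using this
  set M := wᴴ * w with hMdef
  have hM : M.IsHermitian := Matrix.isHermitian_conjTranspose_mul_self w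
  have hMne : M ≠ 0 := fun h => hw0 (Matrix.conjTranspose_mul_self_eq_zero.mp h)
  have hex : ∃ i0, hM.eigenvalues i0 ≠ 0 := by
    by_contra h
    push_neg at h
    apply hMne
    have hd : Matrix.diagonal (RCLike.ofReal ∘ hM.eigenvalues) = (0 : Matrix (Fin n) (Fin n) ℂ) := by
      have h2 : (RCLike.ofReal ∘ hM.eigenvalues : Fin n → ℂ) = fun _ => 0 := by
        funext i; simp [h i]
      rw [h2]
      exact Matrix.diagonal_zero
    calc M = ↑hM.eigenvectorUnitary * Matrix.diagonal (RCLike.ofReal ∘ hM.eigenvalues) *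
            star ↑hM.eigenvectorUnitary := hM.spectral_theorem
      _ = 0 := by rw [hd]; simp
  obtain ⟨i0, hi0⟩ := hex
  set μ : ℝ := hM.eigenvalues i0 with hμdef
  set v : Fin n → ℂ := (WithLp.equiv 2 (Fin n → ℂ)) (hM.eigenvectorBasis i0) with hvdef
  have hMv : M *ᵥ v = (μ : ℂ) • v := by
    have h1 := hM.mulVec_eigenvectorBasis i0
    change M *ᵥ v = μ • v at h1
    rw [h1]
    funext k
    simp [Complex.real_smul]
  have hv1 : ip v v = 1 := by
    have h2 : (inner ℂ (hM.eigenvectorBasis i0) (hM.eigenvectorBasis i0) : ℂ) = 1 :=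
      (orthonormal_iff_ite.mp (hM.eigenvectorBasis).orthonormal i0 i0).trans (by simp)
    rw [ip_eq_inner] at h2
    exact h2
  set y : Fin n → ℂ := w *ᵥ v with hydef
  have hyy : ip y y = (μ : ℂ) := by
    calc ip y y = star y ⬝ᵥ y := rfl
      _ = (star v ᵥ* wᴴ) ⬝ᵥ y := by rw [hydef, star_mulVec]
      _ = star v ⬝ᵥ (wᴴ *ᵥ y) := (dotProduct_mulVec _ _ _).symm
      _ = star v ⬝ᵥ (M *ᵥ v) := by rw [hydef, mulVec_mulVec]
      _ = star v ⬝ᵥ ((μ : ℂ) • v) := by rw [hMv]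
      _ = (μ : ℂ) * ip v v := by rw [dotProduct_smul]; rfl
      _ = (μ : ℂ) := by rw [hv1, mul_one]
  have hyy' : ((∑ k, Complex.normSq (y k) : ℝ) : ℂ) = (μ : ℂ) := by
    rw [← hyy, ip_apply]
    push_cast
    exact Finset.sum_congr rfl fun k _ => by
      rw [mul_comm, Complex.mul_conj]
  have hμsum : (∑ k, Complex.normSq (y k) : ℝ) = μ := by exact_mod_cast hyy'
  have hμpos : 0 < μ := by
    refine lt_of_le_of_ne ?_ (Ne.symm hi0)
    rw [← hμsum]
    exact Finset.sum_nonneg fun k _ => Complex.normSq_nonneg _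
  set σ : ℝ := Real.sqrt μ with hσdef
  have hσpos : 0 < σ := Real.sqrt_pos.mpr hμpos
  have hσsq : σ ^ 2 = μ := Real.sq_sqrt hμpos.le
  have hσsqC : ((σ : ℂ)) ^ 2 = (μ : ℂ) := by exact_mod_cast congrArg Complex.ofReal hσsq
  have hσne : (σ : ℂ) ≠ 0 := by
    simp only [ne_eq, Complex.ofReal_eq_zero]
    exact hσpos.ne'
  -- conjugated eigen relation
  have h1 : wᴴ *ᵥ y = (μ : ℂ) • v := by
    rw [hydef, mulVec_mulVec, ← hMdef, hMv]
  have h2 : ∀ i, ∑ j, (starRingEnd ℂ) (w i j) * y j = -((μ : ℂ) * v i) := by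
    intro i
    have h3 := congrFun h1 i
    simp only [mulVec, dotProduct, conjTranspose_apply, Pi.smul_apply, smul_eq_mul] at h3
    have h4 : ∀ j, (star (w j i) : ℂ) = -((starRingEnd ℂ) (w i j)) := fun j => by
      rw [hwe j i]; simp
    rw [Finset.sum_congr rfl (fun j _ => by rw [h4 j])] at h3
    have h5 : ∑ j, -((starRingEnd ℂ) (w i j)) * y j
        = -(∑ j, (starRingEnd ℂ) (w i j) * y j) := by
      rw [← Finset.sum_neg_distrib]
      exact Finset.sum_congr rfl fun j _ => by ring
    rw [h5] at h3
    exact neg_eq_iff_eq_neg.mp h3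
  have hyconj : w *ᵥ star y = -((μ : ℂ) • star v) := by
    funext i
    have h5 := congrArg (starRingEnd ℂ) (h2 i)
    simp only [map_sum, _root_.map_mul, map_neg] at h5
    calc (w *ᵥ star y) i = ∑ j, w i j * (starRingEnd ℂ) (y j) := by
          simp [mulVec, dotProduct]
      _ = ∑ j, (starRingEnd ℂ) ((starRingEnd ℂ) (w i j)) * (starRingEnd ℂ) (y j) := by
          simp
      _ = -((starRingEnd ℂ) ((μ : ℂ)) * (starRingEnd ℂ) (v i)) := h5
      _ = (-((μ : ℂ) • star v)) i := by
          simp [Pi.smul_apply, Complex.conj_ofReal]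
  set u : Fin n → ℂ := ((σ : ℂ))⁻¹ • star y with hudef
  have hstaru : star u = ((σ : ℂ))⁻¹ • y := by
    rw [hudef, star_smul, star_star]
    congr 1
    simp [Complex.conj_ofReal]
  have hu1 : ip u u = 1 := by
    rw [hudef, ip_smul_smul, ip_star_star, hyy]
    simp only [map_inv₀, Complex.conj_ofReal]
    rw [← hσsqC]
    field_simp
  have hipuv : ip u v = 0 := by
    have hBvv : B w v v = 0 := by
      have h := B_skew hw v v
      linear_combination (1/2 : ℂ) * h
    have hyv : y ⬝ᵥ v = 0 := by
      rw [dotProduct_comm]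
      exact hBvv
    rw [hudef, ip_apply]
    have : ∀ k, (starRingEnd ℂ) ((((σ : ℂ))⁻¹ • star y) k) * v k
        = ((σ : ℂ))⁻¹ * (y k * v k) := by
      intro k
      simp only [Pi.smul_apply, Pi.star_apply, smul_eq_mul, _root_.map_mul, map_inv₀,
        Complex.conj_ofReal]
      rw [starRingEnd_apply, star_star]
      ring
    rw [Finset.sum_congr rfl fun k _ => this k, ← Finset.mul_sum]
    have : ∑ k, y k * v k = 0 := hyv
    rw [this, mul_zero]
  have hrelv : w *ᵥ v = (σ : ℂ) • star u := by
    rw [hstaru, smul_smul, mul_inv_cancel₀ hσne, one_smul, hydef]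
  have hrelu : w *ᵥ u = -((σ : ℂ) • star v) := by
    rw [hudef, mulVec_smul, hyconj, smul_neg, smul_smul]
    congr 2
    rw [inv_mul_eq_div, div_eq_iff hσne, ← hσsqC]
    ring
  exact ⟨σ, u, v, hσpos, hu1, hv1, hipuv, hrelv, hrelu⟩

lemma exists_complement_basis {m : ℕ} (u v : Fin (m+2) → ℂ)
    (hu : ip u u = 1) (hv : ip v v = 1) (huv : ip u v = 0) :
    ∃ b : Fin m → (Fin (m+2) → ℂ),
      (∀ j j', ip (b j) (b j') = if j = j' then 1 else 0) ∧
      (∀ j, ip u (b j) = 0) ∧ (∀ j, ip v (b j) = 0) := by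
  have hvu : ip v u = 0 := by rw [ip_conj, huv]; simp
  set E := EuclideanSpace ℂ (Fin (m+2)) with hEdef
  set pf : Fin 2 → E := ![WithLp.toLp 2 u, WithLp.toLp 2 v] with hpfdef
  have hpf : Orthonormal ℂ pf := by
    rw [orthonormal_iff_ite]
    intro i j
    fin_cases i <;> fin_cases j <;>
      simp only [hpfdef, Matrix.cons_val_zero, Matrix.cons_val_one, Matrix.head_cons,
        Fin.mk_zero, Fin.mk_one, if_true, if_false, Fin.zero_eq_one_iff, Fin.one_eq_zero_iff,
        Nat.succ_ne_self]
    · exact (ip_eq_inner (WithLp.toLp 2 u) (WithLp.toLp 2 u)).trans hu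
    · exact (ip_eq_inner (WithLp.toLp 2 u) (WithLp.toLp 2 v)).trans huv
    · exact (ip_eq_inner (WithLp.toLp 2 v) (WithLp.toLp 2 u)).trans hvu
    · exact (ip_eq_inner (WithLp.toLp 2 v) (WithLp.toLp 2 v)).trans hv
  set S := Submodule.span ℂ (Set.range pf) with hSdef
  set K := Sᗮ with hKdef
  have hfr : Module.finrank ℂ K = m := by
    have h1 := Submodule.finrank_add_finrank_orthogonal S
    have h2 : Module.finrank ℂ S = 2 := by
      rw [hSdef, finrank_span_eq_card hpf.linearIndependent]
      simp
    rw [finrank_euclideanSpace, h2] at h1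
    simp only [Fintype.card_fin] at h1
    rw [hKdef]
    omega
  set ob : OrthonormalBasis (Fin m) ℂ K := (stdOrthonormalBasis ℂ K).reindex (finCongr hfr)
    with hobdef
  refine ⟨fun j => ((ob j : E) : Fin (m+2) → ℂ), ?_, ?_, ?_⟩
  · intro j j'
    rw [← ip_eq_inner, ← Submodule.coe_inner]
    exact orthonormal_iff_ite.mp ob.orthonormal j j'
  · intro j
    have hmem : (ob j : E) ∈ Sᗮ := (ob j).2
    rw [Submodule.mem_orthogonal] at hmem
    exact (ip_eq_inner (WithLp.toLp 2 u) ((ob j : E))).symm.trans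
      (hmem (WithLp.toLp 2 u) (Submodule.subset_span ⟨0, by simp [hpfdef]⟩))
  · intro j
    have hmem : (ob j : E) ∈ Sᗮ := (ob j).2
    rw [Submodule.mem_orthogonal] at hmem
    exact (ip_eq_inner (WithLp.toLp 2 v) ((ob j : E))).symm.trans
      (hmem (WithLp.toLp 2 v) (Submodule.subset_span ⟨1, by simp [hpfdef]⟩))

lemma B_eq_double_sum {m : ℕ} (A : Matrix (Fin m) (Fin m) ℂ) (x y : Fin m → ℂ) :
    B A x y = ∑ j, ∑ j', x j * y j' * A j j' := by
  simp only [B, dotProduct, mulVec, Finset.mul_sum]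
  exact Finset.sum_congr rfl fun j _ => Finset.sum_congr rfl fun j' _ => by ring

lemma canon_shift (r' : ℕ) (z' : ℕ → ℝ) (σ : ℝ) (k l : ℕ) :
    canon (r' + 1) (fun t => if t = 0 then σ else z' (t - 1)) (k + 2) (l + 2)
      = canon r' z' k l := by
  have e1 : ((k + 2) % 2 = 0 ∧ l + 2 = (k + 2) + 1 ∧ k + 2 < 2 * (r' + 1))
      ↔ (k % 2 = 0 ∧ l = k + 1 ∧ k < 2 * r') := by omega
  have e2 : ((l + 2) % 2 = 0 ∧ k + 2 = (l + 2) + 1 ∧ l + 2 < 2 * (r' + 1))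
      ↔ (l % 2 = 0 ∧ k = l + 1 ∧ l < 2 * r') := by omega
  have d1 : (k + 2) / 2 = k / 2 + 1 := by omega
  have d2 : (l + 2) / 2 = l / 2 + 1 := by omega
  unfold canon
  refine if_congr e1 ?_ (if_congr e2 ?_ rfl)
  · rw [d1]; norm_num
  · rw [d2]; norm_num

lemma good_of_antisym (n : ℕ) : ∀ w : Matrix (Fin n) (Fin n) ℂ, wᵀ = -w → Good n w := by
  induction n using Nat.strong_induction_on with
  | _ n IH =>
  intro w hw
  by_cases hw0 : w = 0
  · -- zero matrix: identity rows, r = 0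
    refine ⟨0, by omega, fun _ => 1, fun k hk => absurd hk (by omega),
      fun i => fun j => if i = j then 1 else 0, ?_, ?_⟩
    · intro i j
      simp [ip_apply, apply_ite (starRingEnd ℂ), ite_mul, mul_ite, Finset.sum_ite_eq, eq_comm]
    · intro i j
      simp [B, hw0, canon]
  · -- nonzero case
    have hwe : ∀ i j, w i j = - w j i := by
      intro i j
      have := congrFun (congrFun hw j) i
      simpa [Matrix.transpose_apply] using this
    have hdiag : ∀ i, w i i = 0 := by
      intro i
      have h := hwe i i
      linear_combination (1/2 : ℂ) * h
    have h2n : 2 ≤ n := by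
      by_contra h
      push_neg at h
      apply hw0
      ext i j
      have hi := i.isLt
      have hj := j.isLt
      have hij : i = j := Fin.ext (by omega)
      rw [hij, hdiag]
      simp
    obtain ⟨m, rfl⟩ : ∃ m, n = m + 2 := ⟨n - 2, by omega⟩
    obtain ⟨σ, u, v, hσpos, hu1, hv1, huv, hrelv, hrelu⟩ := exists_pair w hw hw0
    obtain ⟨b, hb, hbu, hbv⟩ := exists_complement_basis u v hu1 hv1 huv
    have hvu : ip v u = 0 := by rw [ip_conj, huv]; simp
    have hBxv : ∀ x, B w x v = (σ : ℂ) * ip u x := fun x => B_eq_of_rel hrelv x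
    have hBxu : ∀ x, B w x u = -((σ : ℂ) * ip v x) := by
      intro x
      have hrelu' : w *ᵥ u = (-(σ : ℂ)) • star v := by rw [hrelu, neg_smul]
      have h := B_eq_of_rel hrelu' x
      rw [h]; ring
    have hBuu : B w u u = 0 := by rw [hBxu, hvu]; ring
    have hBuv : B w u v = (σ : ℂ) := by rw [hBxv, hu1, mul_one]
    have hBvu : B w v u = -(σ : ℂ) := by rw [hBxu, hv1]; ring
    have hBvv : B w v v = 0 := by rw [hBxv, huv]; ring
    have hBbv : ∀ j, B w (b j) v = 0 := fun j => by rw [hBxv, hbu j, mul_zero]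
    have hBbu : ∀ j, B w (b j) u = 0 := fun j => by rw [hBxu, hbv j]; ring
    have hBub : ∀ j, B w u (b j) = 0 := fun j => by rw [B_skew hw, hBbu j, neg_zero]
    have hBvb : ∀ j, B w v (b j) = 0 := fun j => by rw [B_skew hw, hBbv j, neg_zero]
    set w' : Matrix (Fin m) (Fin m) ℂ := Matrix.of (fun k l => B w (b k) (b l)) with hw'def
    have hw'app : ∀ k l, w' k l = B w (b k) (b l) := fun k l => rfl
    have hw' : w'ᵀ = -w' := by
      ext k l
      rw [Matrix.transpose_apply, Matrix.neg_apply, hw'app, hw'app]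
      exact B_skew hw (b l) (b k)
    obtain ⟨r', hr', z', hz', c, hc_on, hc_form⟩ := IH m (by omega) w' hw'
    set lifted : Fin m → (Fin (m+2) → ℂ) := fun k => ∑ j, c k j • b j with hlif
    have hlip : ∀ k l, ip (lifted k) (lifted l) = if k = l then 1 else 0 := by
      intro k l
      rw [hlif]
      simp only
      rw [ip_sum_sum]
      have step : ∀ j : Fin m, ∑ j', (starRingEnd ℂ) (c k j) * c l j' * ip (b j) (b j')
          = (starRingEnd ℂ) (c k j) * c l j := by
        intro j
        rw [Finset.sum_congr rfl (fun j' _ => by rw [hb j j'])]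
        simp [mul_ite, Finset.sum_ite_eq, eq_comm]
      rw [Finset.sum_congr rfl (fun j _ => step j)]
      exact hc_on k l
    have hiplu : ∀ k, ip u (lifted k) = 0 := by
      intro k
      rw [hlif]
      simp only
      rw [ip_sum_right]
      simp [hbu]
    have hiplv : ∀ k, ip v (lifted k) = 0 := by
      intro k
      rw [hlif]
      simp only
      rw [ip_sum_right]
      simp [hbv]
    have hiplu' : ∀ k, ip (lifted k) u = 0 := fun k => by rw [ip_conj, hiplu]; simp
    have hiplv' : ∀ k, ip (lifted k) v = 0 := fun k => by rw [ip_conj, hiplv]; simp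
    have hBll : ∀ k l, B w (lifted k) (lifted l) = canon r' z' (k : ℕ) (l : ℕ) := by
      intro k l
      rw [hlif]
      simp only
      rw [B_sum_sum]
      have e : B w' (c k) (c l) = ∑ j, ∑ j', c k j * c l j' * B w (b j) (b j') := by
        rw [B_eq_double_sum]
        exact Finset.sum_congr rfl fun j _ => Finset.sum_congr rfl fun j' _ => by
          rw [hw'app]
      rw [← e]
      exact hc_form k l
    have hBul : ∀ k, B w u (lifted k) = 0 := by
      intro k
      rw [hlif]
      simp only
      rw [B_sum_right]
      simp [hBub]
    have hBvl : ∀ k, B w v (lifted k) = 0 := by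
      intro k
      rw [hlif]
      simp only
      rw [B_sum_right]
      simp [hBvb]
    have hBlu : ∀ k, B w (lifted k) u = 0 := fun k => by
      rw [B_skew hw, hBul k, neg_zero]
    have hBlv : ∀ k, B w (lifted k) v = 0 := fun k => by
      rw [B_skew hw, hBvl k, neg_zero]
    have hBlu' : ∀ k, B w u (lifted k) = 0 := hBul
    -- assemble rows
    set rows : Fin (m+2) → (Fin (m+2) → ℂ) := fun i =>
      if h0 : (i : ℕ) = 0 then u else if h1 : (i : ℕ) = 1 then v
      else lifted ⟨(i : ℕ) - 2, by have := i.isLt; omega⟩ with hrowsdef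
    have hrows0 : ∀ i : Fin (m+2), (i : ℕ) = 0 → rows i = u := by
      intro i hi; rw [hrowsdef]; simp only; rw [dif_pos hi]
    have hrows1 : ∀ i : Fin (m+2), (i : ℕ) = 1 → rows i = v := by
      intro i hi; rw [hrowsdef]; simp only; rw [dif_neg (by omega), dif_pos hi]
    have hrows2 : ∀ (i : Fin (m+2)) (k : Fin m), (i : ℕ) = (k : ℕ) + 2 → rows i = lifted k := by
      intro i k hik
      rw [hrowsdef]
      simp only
      rw [dif_neg (by omega), dif_neg (by omega)]
      exact congrArg lifted (Fin.ext (by simp only [Fin.val_mk]; omega))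
    have hcase : ∀ i : Fin (m+2),
        ((i : ℕ) = 0) ∨ ((i : ℕ) = 1) ∨ ∃ k : Fin m, (i : ℕ) = (k : ℕ) + 2 := by
      intro i
      by_cases h0 : (i : ℕ) = 0
      · exact Or.inl h0
      by_cases h1 : (i : ℕ) = 1
      · exact Or.inr (Or.inl h1)
      refine Or.inr (Or.inr ⟨⟨(i : ℕ) - 2, by have := i.isLt; omega⟩, ?_⟩)
      show (i : ℕ) = (i : ℕ) - 2 + 2
      omega
    set z : ℕ → ℝ := fun t => if t = 0 then σ else z' (t - 1) with hzdef
    have hz0 : z 0 = σ := by simp [hzdef]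
    have hzs : ∀ t, z (t + 1) = z' t := by intro t; simp [hzdef]
    refine ⟨r' + 1, by omega, z, ?_, rows, ?_, ?_⟩
    · intro k hk
      by_cases h : k = 0
      · rw [h, hz0]; exact hσpos
      · rw [show k = (k - 1) + 1 by omega, hzs]
        exact hz' (k - 1) (by omega)
    · -- orthonormality
      intro i j
      rcases hcase i with hi | hi | ⟨k, hi⟩ <;> rcases hcase j with hj | hj | ⟨l, hj⟩
      · rw [hrows0 i hi, hrows0 j hj, hu1, if_pos (Fin.ext (by omega))]
      · rw [hrows0 i hi, hrows1 j hj, huv, if_neg (by intro h; rw [h] at hi; omega)]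
      · rw [hrows0 i hi, hrows2 j l hj, hiplu, if_neg (by intro h; rw [h] at hi; omega)]
      · rw [hrows1 i hi, hrows0 j hj, hvu, if_neg (by intro h; rw [h] at hi; omega)]
      · rw [hrows1 i hi, hrows1 j hj, hv1, if_pos (Fin.ext (by omega))]
      · rw [hrows1 i hi, hrows2 j l hj, hiplv, if_neg (by intro h; rw [h] at hi; omega)]
      · rw [hrows2 i k hi, hrows0 j hj, hiplu', if_neg (by intro h; rw [h] at hi; omega)]
      · rw [hrows2 i k hi, hrows1 j hj, hiplv', if_neg (by intro h; rw [h] at hi; omega)]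
      · rw [hrows2 i k hi, hrows2 j l hj, hlip]
        by_cases hkl : k = l
        · rw [if_pos hkl, if_pos (Fin.ext (by rw [hi, hj, hkl]))]
        · rw [if_neg hkl, if_neg (by
            intro h
            apply hkl
            apply Fin.ext
            rw [h] at hi
            omega)]
    · -- the bilinear form values
      intro i j
      rcases hcase i with hi | hi | ⟨k, hi⟩ <;> rcases hcase j with hj | hj | ⟨l, hj⟩ <;>
        rw [hi, hj]
      · rw [hrows0 i hi, hrows0 j hj, hBuu]
        simp [canon]
      · rw [hrows0 i hi, hrows1 j hj, hBuv]
        rw [canon, if_pos (by omega)]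
        simp [hz0]
      · rw [hrows0 i hi, hrows2 j l hj, hBul]
        rw [canon, if_neg (by omega), if_neg (by omega)]
      · rw [hrows1 i hi, hrows0 j hj, hBvu]
        rw [canon, if_neg (by omega), if_pos (by omega)]
        simp [hz0]
      · rw [hrows1 i hi, hrows1 j hj, hBvv]
        simp [canon]
      · rw [hrows1 i hi, hrows2 j l hj, hBvl]
        rw [canon, if_neg (by omega), if_neg (by omega)]
      · rw [hrows2 i k hi, hrows0 j hj, hBlu]
        rw [canon, if_neg (by omega), if_neg (by omega)]
      · rw [hrows2 i k hi, hrows1 j hj, hBlv]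
        rw [canon, if_neg (by omega), if_neg (by omega)]
      · rw [hrows2 i k hi, hrows2 j l hj, hBll, hzdef]
        exact (canon_shift r' z' σ (k : ℕ) (l : ℕ)).symm

end
end AntisymAux


open AntisymAux in
/-- Every complex antisymmetric matrix can be brought by a unitary
congruence `w ↦ U w Uᵀ` to a block diagonal form with 2×2 blocks `[[0,zᵢ],[-zᵢ,0]]`,
`zᵢ > 0`, followed by a zero block. -/
theorem antisymmetric_unitary_congruence_block_diagonal
    (n : ℕ) (w : Matrix (Fin n) (Fin n) ℂ) (hw : wᵀ = -w) :
    ∃ U : Matrix (Fin n) (Fin n) ℂ, U ∈ Matrix.unitaryGroup (Fin n) ℂ ∧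
      ∃ r : ℕ, 2 * r ≤ n ∧ ∃ z : ℕ → ℝ, (∀ k, k < r → 0 < z k) ∧
        ∀ i j : Fin n, (U * w * Uᵀ) i j =
          if (i : ℕ) % 2 = 0 ∧ (j : ℕ) = (i : ℕ) + 1 ∧ (i : ℕ) < 2 * r then
            ((z ((i : ℕ) / 2) : ℝ) : ℂ)
          else if (j : ℕ) % 2 = 0 ∧ (i : ℕ) = (j : ℕ) + 1 ∧ (j : ℕ) < 2 * r then
            (-(z ((j : ℕ) / 2) : ℝ) : ℂ)
          else 0 := by
  obtain ⟨r, hr, z, hz, rows, hon, hform⟩ := good_of_antisym n w hw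
  refine ⟨Matrix.of (fun i j => rows i j), ?_, r, hr, z, hz, ?_⟩
  · rw [Matrix.mem_unitaryGroup_iff]
    ext i j
    rw [Matrix.star_eq_conjTranspose]
    simp only [Matrix.mul_apply, Matrix.conjTranspose_apply, Matrix.of_apply,
      Matrix.one_apply, starRingEnd_apply]
    have h := hon i j
    rw [ip_apply] at h
    have h2 := congrArg (starRingEnd ℂ) h
    simp only [map_sum, _root_.map_mul, apply_ite (starRingEnd ℂ),
      _root_.map_one, _root_.map_zero, starRingEnd_apply, star_star] at h2
    exact h2
  · intro i j
    have h := hform i j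
    have e : (Matrix.of (fun i j => rows i j) * w * (Matrix.of (fun i j => rows i j))ᵀ) i j
        = B w (rows i) (rows j) := by
      simp only [Matrix.mul_apply, Matrix.transpose_apply, Matrix.of_apply, B,
        Matrix.mulVec, dotProduct, Finset.sum_mul, Finset.mul_sum]
      rw [Finset.sum_comm]
      exact Finset.sum_congr rfl fun k _ => Finset.sum_congr rfl fun l _ => by ring
    rw [e, h]
    rfl
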